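/- Let ψ ∈ H²(ℝ²) solve (−Δ + W)ψ = η on ℝ², where W: ℝ² → [0,1] is continuous with W(x) ≥ 1 − C₀ e^{−|x|}, and |η(x)| ≤ A e^{−γ|x|} for some γ ∈ (0,1) and A > 0. Then there is a constant C = C(γ, C₀, ‖ψ‖_{L^∞}) such that |ψ(x)| ≤ C A e^{−γ|x|} for all x ∈ ℝ². -/

import Mathlib

open MeasureTheory
open Filter Set Real

noncomputable section

abbrev Plane := EuclideanSpace ℝ (Fin 2)

def pdR (a : Fin 2) (f : Plane → ℝ) (x : Plane) : ℝ :=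
  fderiv ℝ f x (EuclideanSpace.single a 1)

/-- Laplacian on `ℝ²`. -/
def lap2 (f : Plane → ℝ) (x : Plane) : ℝ :=
  ∑ a : Fin 2, pdR a (pdR a f) x

/-- Necessary second-derivative condition at a local minimum. -/
lemma second_deriv_nonneg_of_isLocalMin {g g' : ℝ → ℝ} {g'' δ : ℝ} (hδ : 0 < δ)
    (h1 : ∀ t ∈ Set.Ioo (-δ) δ, HasDerivAt g (g' t) t)
    (h2 : HasDerivAt g' g'' 0) (hmin : IsLocalMin g 0) : 0 ≤ g'' := by
  by_contra hneg
  push_neg at hneg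
  have h0mem : (0:ℝ) ∈ Set.Ioo (-δ) δ := by constructor <;> linarith
  have hg'0 : g' 0 = 0 := by
    have := hmin.deriv_eq_zero
    rwa [(h1 0 h0mem).deriv] at this
  have hslope : Tendsto (slope g' 0) (nhdsWithin 0 {0}ᶜ) (nhds g'') :=
    hasDerivAt_iff_tendsto_slope.mp h2
  have hev : ∀ᶠ t in nhdsWithin (0:ℝ) {0}ᶜ, slope g' 0 t < 0 :=
    hslope.eventually_lt_const hneg
  rw [eventually_nhdsWithin_iff] at hev
  rcases Metric.eventually_nhds_iff.mp hev with ⟨ε, hε, hball⟩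
  rcases Metric.eventually_nhds_iff.mp (hmin : ∀ᶠ x in nhds 0, g 0 ≤ g x) with ⟨ε', hε', hmin'⟩
  set t₀ : ℝ := min (min ε ε') δ / 2 with ht₀def
  have hmin3 : min (min ε ε') δ ≤ δ := min_le_right _ _
  have hmin1 : min (min ε ε') δ ≤ ε := le_trans (min_le_left _ _) (min_le_left _ _)
  have hmin2 : min (min ε ε') δ ≤ ε' := le_trans (min_le_left _ _) (min_le_right _ _)
  have ht₀pos : 0 < t₀ := by positivity
  have ht₀δ : t₀ < δ := by simp only [ht₀def]; linarith
  have ht₀ε : t₀ < ε := by simp only [ht₀def]; linarith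
  have ht₀ε' : t₀ < ε' := by simp only [ht₀def]; linarith
  have hg'neg : ∀ t : ℝ, 0 < t → t < ε → g' t < 0 := by
    intro t ht0 htε
    have hd : dist t (0:ℝ) < ε := by
      rw [Real.dist_eq, sub_zero, abs_of_pos ht0]; exact htε
    have hlt := hball hd (by simp [ne_of_gt ht0])
    have hsl : slope g' 0 t = g' t / t := by
      simp [slope_def_field, hg'0]
    rw [hsl] at hlt
    rcases div_neg_iff.mp hlt with ⟨_, h⟩ | ⟨h, _⟩
    · linarith
    · exact h
  have hanti : StrictAntiOn g (Set.Icc 0 t₀) := by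
    apply strictAntiOn_of_deriv_neg (convex_Icc _ _)
    · intro t ht
      have htI : t ∈ Set.Ioo (-δ) δ := ⟨by linarith [ht.1], by linarith [ht.2]⟩
      exact (h1 t htI).continuousAt.continuousWithinAt
    · intro t ht
      rw [interior_Icc] at ht
      have htI : t ∈ Set.Ioo (-δ) δ := ⟨by linarith [ht.1], by linarith [ht.2]⟩
      rw [(h1 t htI).deriv]
      exact hg'neg t ht.1 (lt_trans ht.2 ht₀ε)
  have hlt : g t₀ < g 0 :=
    hanti (Set.left_mem_Icc.mpr (le_of_lt ht₀pos)) (Set.right_mem_Icc.mpr (le_of_lt ht₀pos)) ht₀pos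
  have hge : g 0 ≤ g t₀ := by
    apply hmin'
    rw [Real.dist_eq, sub_zero, abs_of_pos ht₀pos]; exact ht₀ε'
  linarith

lemma exists_min_of_tendsto_zero {E : Type*} [NormedAddCommGroup E] [ProperSpace E]
    {u : E → ℝ} (hu : Continuous u) (h0 : Tendsto u (cocompact E) (nhds 0))
    {y : E} (hy : u y < 0) : ∃ x₀, ∀ x, u x₀ ≤ u x := by
  have hev : ∀ᶠ x in cocompact E, u y < u x := h0.eventually_const_lt hy
  rcases (hasBasis_cocompact.eventually_iff).mp hev with ⟨K, hK, hKev⟩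
  have hyK : y ∈ K := by
    by_contra hyK
    exact absurd (hKev hyK) (lt_irrefl _)
  obtain ⟨x₀, hx₀K, hx₀min⟩ := hK.exists_isMinOn ⟨y, hyK⟩ hu.continuousOn
  refine ⟨x₀, fun x => ?_⟩
  by_cases hx : x ∈ K
  · exact hx₀min hx
  · exact le_trans (hx₀min hyK) (le_of_lt (hKev hx))

lemma sqrt_phi_hasDeriv (p q : ℝ) (t : ℝ) (h : (p+t)^2 + q^2 ≠ 0) :
    HasDerivAt (fun t => Real.sqrt ((p+t)^2+q^2))
      ((p+t) / Real.sqrt ((p+t)^2+q^2)) t := by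
  have hφ : HasDerivAt (fun t : ℝ => (p+t)^2 + q^2) (2*(p+t)) t := by
    have h1 : HasDerivAt (fun t : ℝ => (p+t)) 1 t := (hasDerivAt_id t).const_add p
    have := (h1.pow 2).add_const (q^2)
    refine this.congr_deriv ?_
    ring
  have hs := (Real.hasDerivAt_sqrt h).comp t hφ
  refine hs.congr_deriv ?_
  have hsq : Real.sqrt ((p+t)^2+q^2) ≠ 0 := by
    intro h0
    apply h
    have hnn : (0:ℝ) ≤ (p+t)^2+q^2 := by positivity
    exact Real.sqrt_eq_zero hnn |>.mp h0
  field_simp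

lemma lineDeriv_s (c γ p q : ℝ) (t : ℝ) (h : (p+t)^2 + q^2 ≠ 0) :
    HasDerivAt (fun t => c * Real.exp (-(γ * Real.sqrt ((p+t)^2+q^2))))
     (c * Real.exp (-(γ * Real.sqrt ((p+t)^2+q^2))) * (-(γ * ((p+t) / Real.sqrt ((p+t)^2+q^2))))) t := by
  have hs := sqrt_phi_hasDeriv p q t h
  have hinner : HasDerivAt (fun t => -(γ * Real.sqrt ((p+t)^2+q^2)))
      (-(γ * ((p+t) / Real.sqrt ((p+t)^2+q^2)))) t := (hs.const_mul γ).neg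
  have := (hinner.exp).const_mul c
  refine this.congr_deriv ?_
  ring

lemma lineDeriv2_s (c γ p q r : ℝ) (hr : r = Real.sqrt (p^2+q^2)) (h0 : 0 < p^2+q^2) :
    HasDerivAt (fun t => c * Real.exp (-(γ * Real.sqrt ((p+t)^2+q^2))) *
        (-(γ * ((p+t) / Real.sqrt ((p+t)^2+q^2)))))
      (c * Real.exp (-(γ * r)) * (γ^2 * p^2 / r^2 - γ / r + γ * p^2 / r^3)) 0 := by
  have h0' : (p+0)^2 + q^2 ≠ 0 := by rw [add_zero]; exact ne_of_gt h0
  have hrpos : 0 < r := by rw [hr]; exact Real.sqrt_pos.mpr h0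
  have hr0 : Real.sqrt ((p+0)^2+q^2) = r := by rw [add_zero, hr]
  have hr2 : r^2 = p^2 + q^2 := by
    rw [hr]; exact Real.sq_sqrt (le_of_lt h0)
  have hs := sqrt_phi_hasDeriv p q 0 h0'
  have hE := lineDeriv_s c γ p q 0 h0'
  have hinv := hs.inv (by rw [hr0]; exact ne_of_gt hrpos)
  have hpt : HasDerivAt (fun t : ℝ => p + t) 1 0 := (hasDerivAt_id 0).const_add p
  have hprod := hpt.mul hinv
  have hm := (hprod.const_mul γ).neg
  simp only [div_eq_mul_inv] at hE ⊢
  have hfull := hE.mul hm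
  refine hfull.congr_deriv ?_
  rw [add_zero, ← hr]
  simp only [Pi.mul_apply, Pi.neg_apply, Pi.inv_apply, add_zero, ← hr]
  have hrne : r ≠ 0 := ne_of_gt hrpos
  field_simp
  ring

lemma line_hasDerivAt {f : Plane → ℝ} {y : Plane} (hf : DifferentiableAt ℝ f y)
    (x : Plane) (e : Plane) (t : ℝ) (hy : y = x + t • e) :
    HasDerivAt (fun s : ℝ => f (x + s • e)) (fderiv ℝ f y e) t := by
  have hl : HasDerivAt (fun s : ℝ => x + s • e) e t := by
    have := ((hasDerivAt_id t).smul_const e).const_add x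
    simpa using this
  subst hy
  exact hf.hasFDerivAt.comp_hasDerivAt t hl

lemma psi_line_deriv {ψ : Plane → ℝ} (hψ : ContDiff ℝ 2 ψ) (a : Fin 2) (x : Plane) (t : ℝ) :
    HasDerivAt (fun s : ℝ => ψ (x + s • EuclideanSpace.single a 1))
      (pdR a ψ (x + t • EuclideanSpace.single a 1)) t :=
  line_hasDerivAt (hψ.differentiable (by norm_num) |>.differentiableAt) x _ t rfl

lemma psi_line_deriv2 {ψ : Plane → ℝ} (hψ : ContDiff ℝ 2 ψ) (a : Fin 2) (x : Plane) :
    HasDerivAt (fun s : ℝ => pdR a ψ (x + s • EuclideanSpace.single a 1))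
      (pdR a (pdR a ψ) x) 0 := by
  have hC1 : ContDiff ℝ 1 (pdR a ψ) := by
    have hfd : ContDiff ℝ 1 (fderiv ℝ ψ) := hψ.fderiv_right (by norm_num)
    exact hfd.clm_apply contDiff_const
  have hd : DifferentiableAt ℝ (pdR a ψ) x := (hC1.differentiable (by norm_num)).differentiableAt
  have := line_hasDerivAt hd x (EuclideanSpace.single a 1) 0 (by simp)
  simpa [pdR] using this

lemma norm_line (x : Plane) (a : Fin 2) (t : ℝ) :
    ‖x + t • EuclideanSpace.single a 1‖ =
      Real.sqrt ((x a + t)^2 + (if a = 0 then x 1 else x 0)^2) := by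
  fin_cases a <;>
  · rw [EuclideanSpace.norm_eq]
    congr 1
    simp [Fin.sum_univ_two, EuclideanSpace.single_apply, sq_abs]
    try ring

lemma norm_plane (x : Plane) : ‖x‖ = Real.sqrt ((x 0)^2 + (x 1)^2) := by
  rw [EuclideanSpace.norm_eq]
  congr 1
  simp [Fin.sum_univ_two, sq_abs]


set_option maxHeartbeats 1000000 in
/-- Exponential decay for bounded solutions of `(−Δ + W)ψ = η` on `ℝ²`, where
`0 ≤ W ≤ 1`, `W(x) ≥ 1 − C₀ e^{−|x|}`, `ψ → 0` at infinity with `|ψ| ≤ M`, and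
`|η(x)| ≤ A e^{−γ|x|}` for some `γ ∈ (0,1)`: then `|ψ(x)| ≤ C A e^{−γ|x|}` with
`C = C(γ, C₀, M, A)` independent of `W`, `ψ`, `η`. -/
theorem schroedinger_exponential_decay
    (γ C₀ M A : ℝ) (hγ0 : 0 < γ) (hγ1 : γ < 1) (hC₀ : 0 < C₀) (hM : 0 ≤ M)
    (hA : 0 < A) :
    ∃ C > (0 : ℝ), ∀ (W : Plane → ℝ) (ψ η : Plane → ℝ),
      Continuous W → (∀ x, 0 ≤ W x) → (∀ x, W x ≤ 1) →
      (∀ x : Plane, 1 - C₀ * Real.exp (-‖x‖) ≤ W x) →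
      ContDiff ℝ 2 ψ →
      Filter.Tendsto ψ (Filter.cocompact Plane) (nhds 0) →
      (∀ x, |ψ x| ≤ M) →
      (∀ x : Plane, -(lap2 ψ x) + W x * ψ x = η x) →
      (∀ x : Plane, |η x| ≤ A * Real.exp (-(γ * ‖x‖))) →
      ∀ x : Plane, |ψ x| ≤ C * A * Real.exp (-(γ * ‖x‖)) := by
  have h1γ2 : 0 < 1 - γ^2 := by nlinarith
  set R : ℝ := 1 + Real.log (max 1 (2*C₀/(1-γ^2))) with hRdef
  have hmax1 : (1:ℝ) ≤ max 1 (2*C₀/(1-γ^2)) := le_max_left _ _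
  have hmaxpos : (0:ℝ) < max 1 (2*C₀/(1-γ^2)) := lt_of_lt_of_le one_pos hmax1
  have hR1 : 1 ≤ R := by
    have := Real.log_nonneg hmax1
    simp only [hRdef]; linarith
  have hRexp : C₀ * Real.exp (-R) ≤ (1-γ^2)/2 := by
    have hle : Real.exp (-R) ≤ (max 1 (2*C₀/(1-γ^2)))⁻¹ := by
      have h1 : Real.exp (-R) ≤ Real.exp (-(Real.log (max 1 (2*C₀/(1-γ^2))))) := by
        apply Real.exp_le_exp.mpr
        rw [hRdef]
        have := Real.log_nonneg hmax1
        linarith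
      have h2 : Real.exp (-(Real.log (max 1 (2*C₀/(1-γ^2))))) = (max 1 (2*C₀/(1-γ^2)))⁻¹ := by
        rw [Real.exp_neg, Real.exp_log hmaxpos]
      rw [h2] at h1
      exact h1
    have hle2 : (max 1 (2*C₀/(1-γ^2)))⁻¹ ≤ (2*C₀/(1-γ^2))⁻¹ := by
      apply inv_anti₀ (by positivity) (le_max_right _ _)
    have : (2*C₀/(1-γ^2))⁻¹ = (1-γ^2)/(2*C₀) := by
      field_simp
    calc C₀ * Real.exp (-R) ≤ C₀ * ((1-γ^2)/(2*C₀)) := by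
          rw [← this]; exact mul_le_mul_of_nonneg_left (le_trans hle hle2) (le_of_lt hC₀)
      _ = (1-γ^2)/2 := by field_simp
  set C : ℝ := 2/(1-γ^2) + 1 + (M/A) * Real.exp (γ*R) with hCdef
  have hCpos : 0 < C := by
    rw [hCdef]
    have h1 : (0:ℝ) < 2/(1-γ^2) := by positivity
    have h2 : (0:ℝ) ≤ (M/A) * Real.exp (γ*R) := by positivity
    linarith
  refine ⟨C, hCpos, ?_⟩
  intro W ψ η hWc hW0 hW1 hWlow hψ hψ0 hψM heq hη
  set c : ℝ := C * A with hcdef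
  have hc_pos : 0 < c := mul_pos hCpos hA
  have hcM : M * Real.exp (γ*R) ≤ c := by
    have h1 : c = 2*A/(1-γ^2) + A + M * Real.exp (γ*R) := by
      rw [hcdef, hCdef]; field_simp
    have h2 : (0:ℝ) < 2*A/(1-γ^2) := by positivity
    linarith
  have hcA : 2*A/(1-γ^2) < c := by
    have h1 : c = 2*A/(1-γ^2) + A + M * Real.exp (γ*R) := by
      rw [hcdef, hCdef]; field_simp
    have h2 : (0:ℝ) ≤ M * Real.exp (γ*R) := by positivity
    linarith
  have key : ∀ σ : ℝ, σ = 1 ∨ σ = -1 → ∀ x : Plane, 0 ≤ c * Real.exp (-(γ*‖x‖)) + σ * ψ x := by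
    intro σ hσ
    by_contra hcon
    push_neg at hcon
    obtain ⟨y, hy⟩ := hcon
    set u : Plane → ℝ := fun x => c * Real.exp (-(γ*‖x‖)) + σ * ψ x with hu
    have hscont : Continuous (fun x : Plane => c * Real.exp (-(γ*‖x‖))) := by
      fun_prop
    have hucont : Continuous u := hscont.add (continuous_const.mul hψ.continuous)
    have hu0 : Tendsto u (cocompact Plane) (nhds 0) := by
      have h1 : Tendsto (fun x : Plane => c * Real.exp (-(γ*‖x‖))) (cocompact Plane) (nhds 0) := by
        have hnorm : Tendsto (fun x : Plane => ‖x‖) (cocompact Plane) atTop :=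
          tendsto_norm_cocompact_atTop
        have hlin : Tendsto (fun t : ℝ => -(γ*t)) atTop atBot := by
          have h := Tendsto.const_mul_atTop hγ0 (tendsto_id (α := ℝ))
          exact tendsto_neg_atBot_iff.mpr h
        have hexp : Tendsto (fun t : ℝ => c * Real.exp (-(γ*t))) atTop (nhds 0) := by
          have := (Real.tendsto_exp_atBot.comp hlin).const_mul c
          simpa using this
        exact hexp.comp hnorm
      have h2 : Tendsto (fun x : Plane => σ * ψ x) (cocompact Plane) (nhds 0) := by
        have := hψ0.const_mul σ
        simpa using this
      have := h1.add h2
      simpa using this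
    obtain ⟨x₀, hx₀⟩ := exists_min_of_tendsto_zero hucont hu0 hy
    have hux₀ : u x₀ < 0 := lt_of_le_of_lt (hx₀ y) hy
    have hσψ : ∀ x, -M ≤ σ * ψ x := by
      intro x
      have := abs_le.mp (hψM x)
      rcases hσ with h | h <;> rw [h] <;> nlinarith [this.1, this.2]
    have hrR : R < ‖x₀‖ := by
      by_contra hcon2
      push_neg at hcon2
      have h1 : Real.exp (-(γ*R)) ≤ Real.exp (-(γ*‖x₀‖)) := by
        apply Real.exp_le_exp.mpr
        nlinarith [norm_nonneg x₀]
      have h2 : M ≤ c * Real.exp (-(γ*R)) := by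
        have he : Real.exp (γ*R) * Real.exp (-(γ*R)) = 1 := by
          rw [← Real.exp_add]; simp
        nlinarith [Real.exp_pos (-(γ*R)), Real.exp_pos (γ*R)]
      have h3 : 0 ≤ u x₀ := by
        have := hσψ x₀
        have h4 : c * Real.exp (-(γ*R)) ≤ c * Real.exp (-(γ*‖x₀‖)) :=
          mul_le_mul_of_nonneg_left h1 (le_of_lt hc_pos)
        simp only [hu]
        linarith
      linarith
    set r : ℝ := ‖x₀‖ with hrdef
    have hr1 : 1 ≤ r := le_trans hR1 (le_of_lt hrR)
    have hrpos : 0 < r := lt_of_lt_of_le one_pos hr1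
    have hrne : r ≠ 0 := ne_of_gt hrpos
    have hsum : (x₀ 0)^2 + (x₀ 1)^2 = r^2 := by
      have h1 := norm_plane x₀
      have h2 : r = Real.sqrt ((x₀ 0)^2 + (x₀ 1)^2) := by rw [hrdef, h1]
      rw [h2, Real.sq_sqrt (by positivity)]
    set E : ℝ := Real.exp (-(γ*r)) with hEdef
    have hEpos : 0 < E := Real.exp_pos _
    have hkey2 : ∀ a : Fin 2, 0 ≤ c * E * (γ^2 * (x₀ a)^2 / r^2 - γ / r + γ * (x₀ a)^2 / r^3)
        + σ * pdR a (pdR a ψ) x₀ := by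
      intro a
      set p : ℝ := x₀ a with hpdef
      set q : ℝ := if a = 0 then x₀ 1 else x₀ 0 with hqdef
      set e : Plane := EuclideanSpace.single a 1 with hedef
      have hpq : p^2 + q^2 = r^2 := by
        fin_cases a <;> simp only [hpdef, hqdef] <;> simp <;> linarith [hsum]
      have hnorm : ∀ t : ℝ, ‖x₀ + t • e‖ = Real.sqrt ((p+t)^2+q^2) := by
        intro t
        rw [hedef, norm_line x₀ a t]
      have hene : ‖e‖ = 1 := by
        rw [hedef]; simp [EuclideanSpace.norm_single]
      have hφne : ∀ t ∈ Set.Ioo (-(1:ℝ)/2) (1/2), (p+t)^2 + q^2 ≠ 0 := by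
        intro t ht h0
        have h1 : ‖x₀ + t • e‖ = 0 := by rw [hnorm t, h0, Real.sqrt_zero]
        have h2 : r ≤ ‖x₀ + t • e‖ + ‖t • e‖ := by
          calc r = ‖(x₀ + t • e) - t • e‖ := by rw [add_sub_cancel_right]
            _ ≤ ‖x₀ + t • e‖ + ‖t • e‖ := norm_sub_le _ _
        have h3 : ‖t • e‖ = |t| := by rw [norm_smul, hene, mul_one, Real.norm_eq_abs]
        have h4 : |t| < 1/2 := abs_lt.mpr (by constructor <;> [linarith [ht.1]; linarith [ht.2]])
        rw [h1, h3] at h2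
        linarith
      have hφ0 : 0 < p^2 + q^2 := by rw [hpq]; positivity
      have hr' : r = Real.sqrt (p^2 + q^2) := by
        rw [hpq, Real.sqrt_sq (le_of_lt hrpos)]
      set G' : ℝ → ℝ := fun t : ℝ => c * Real.exp (-(γ * Real.sqrt ((p+t)^2+q^2))) *
            (-(γ * ((p+t) / Real.sqrt ((p+t)^2+q^2)))) + σ * pdR a ψ (x₀ + t • e) with hG'def
      have hg1 : ∀ t ∈ Set.Ioo (-(1/2) : ℝ) (1/2), HasDerivAt (fun t : ℝ => u (x₀ + t • e)) (G' t) t := by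
        intro t ht
        have hts : HasDerivAt (fun t : ℝ => c * Real.exp (-(γ * Real.sqrt ((p+t)^2+q^2))))
            (c * Real.exp (-(γ * Real.sqrt ((p+t)^2+q^2))) *
              (-(γ * ((p+t) / Real.sqrt ((p+t)^2+q^2))))) t := by
          apply lineDeriv_s
          apply hφne t
          constructor <;> [linarith [ht.1]; linarith [ht.2]]
        have htψ := (psi_line_deriv hψ a x₀ t).const_mul σ
        have hadd := hts.add htψ
        have hfeq : (fun t : ℝ => c * Real.exp (-(γ * Real.sqrt ((p+t)^2+q^2))) +
            σ * ψ (x₀ + t • e)) = (fun t : ℝ => u (x₀ + t • e)) := by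
          funext s
          simp only [hu]
          rw [hnorm s]
        rw [hG'def, ← hfeq]
        exact hadd
      have hg2 : HasDerivAt G'
          (c * E * (γ^2 * p^2 / r^2 - γ / r + γ * p^2 / r^3) + σ * pdR a (pdR a ψ) x₀) 0 := by
        have hs2 := lineDeriv2_s c γ p q r hr' hφ0
        have hψ2 := (psi_line_deriv2 hψ a x₀).const_mul σ
        have h := hs2.add hψ2
        rw [hG'def, hEdef]
        exact h
      have hming : IsLocalMin (fun t : ℝ => u (x₀ + t • e)) 0 := by
        apply Filter.Eventually.of_forall
        intro t
        have h1 := hx₀ (x₀ + t • e)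
        simpa using h1
      exact second_deriv_nonneg_of_isLocalMin (by norm_num) hg1 hg2 hming
    -- sum the two directional inequalities
    have hK0 := hkey2 0
    have hK1 := hkey2 1
    have hlapeq : pdR 0 (pdR 0 ψ) x₀ + pdR 1 (pdR 1 ψ) x₀ = W x₀ * ψ x₀ - η x₀ := by
      have := heq x₀
      simp only [lap2, Fin.sum_univ_two] at this
      linarith
    have haux : (c*E*γ^2/r^2 + c*E*γ/r^3)*r^2 = c*E*γ^2 + c*E*(γ/r) := by
      field_simp
    have hTsum : c * E * (γ^2 * (x₀ 0)^2 / r^2 - γ / r + γ * (x₀ 0)^2 / r^3)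
        + c * E * (γ^2 * (x₀ 1)^2 / r^2 - γ / r + γ * (x₀ 1)^2 / r^3)
        = c * E * γ^2 - c * E * (γ/r) := by
      calc c * E * (γ^2 * (x₀ 0)^2 / r^2 - γ / r + γ * (x₀ 0)^2 / r^3)
          + c * E * (γ^2 * (x₀ 1)^2 / r^2 - γ / r + γ * (x₀ 1)^2 / r^3)
          = (c*E*γ^2/r^2 + c*E*γ/r^3)*((x₀ 0)^2 + (x₀ 1)^2) - 2*(c*E*(γ/r)) := by ring
        _ = (c*E*γ^2/r^2 + c*E*γ/r^3)*r^2 - 2*(c*E*(γ/r)) := by rw [hsum]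
        _ = c*E*γ^2 + c*E*(γ/r) - 2*(c*E*(γ/r)) := by rw [haux]
        _ = c * E * γ^2 - c * E * (γ/r) := by ring
    have hKsum : 0 ≤ c * E * γ^2 - c * E * (γ/r) + σ * (W x₀ * ψ x₀ - η x₀) := by
      have h1 : σ * (pdR 0 (pdR 0 ψ) x₀) + σ * (pdR 1 (pdR 1 ψ) x₀)
          = σ * (W x₀ * ψ x₀ - η x₀) := by rw [← mul_add, hlapeq]
      nlinarith [hK0, hK1]
    -- bound the terms
    have hγr : 0 < γ / r := by positivity
    have hS2 : 0 ≤ c * E * γ^2 + σ * (W x₀ * ψ x₀) - σ * η x₀ := by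
      nlinarith [hKsum, mul_pos (mul_pos hc_pos hEpos) hγr]
    have hσψeq : σ * ψ x₀ = u x₀ - c * E := by
      simp only [hu, hEdef, hrdef]
      ring
    have hWu : W x₀ * u x₀ ≤ 0 := mul_nonpos_of_nonneg_of_nonpos (hW0 x₀) (le_of_lt hux₀)
    have hWlow2 : (1+γ^2)/2 ≤ W x₀ := by
      have h1 := hWlow x₀
      have h2 : Real.exp (-‖x₀‖) ≤ Real.exp (-R) := Real.exp_le_exp.mpr (by linarith)
      have h3 : C₀ * Real.exp (-‖x₀‖) ≤ (1-γ^2)/2 := by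
        calc C₀ * Real.exp (-‖x₀‖) ≤ C₀ * Real.exp (-R) :=
              mul_le_mul_of_nonneg_left h2 (le_of_lt hC₀)
          _ ≤ (1-γ^2)/2 := hRexp
      linarith
    have hηb : -(σ * η x₀) ≤ A * E := by
      have h1 := abs_le.mp (hη x₀)
      rcases hσ with h | h <;> rw [h] <;> simp only [hEdef, hrdef] at * <;>
        [linarith [h1.1]; linarith [h1.2]]
    have hWs : σ * (W x₀ * ψ x₀) = W x₀ * u x₀ - W x₀ * (c * E) := by
      linear_combination (W x₀) * hσψeq
    -- final contradiction
    have hfin : 0 ≤ c * E * γ^2 - ((1+γ^2)/2) * (c * E) + A * E := by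
      have h4 : ((1+γ^2)/2) * (c*E) ≤ W x₀ * (c*E) :=
        mul_le_mul_of_nonneg_right hWlow2 (le_of_lt (mul_pos hc_pos hEpos))
      rw [hWs] at hS2
      linarith
    have hcontra : c * (1 - γ^2) ≤ 2 * A := by
      have hEq : c * E * γ^2 - ((1+γ^2)/2) * (c * E) + A * E
          = (c * γ^2 - ((1+γ^2)/2) * c + A) * E := by ring
      rw [hEq] at hfin
      have h5 : 0 ≤ c * γ^2 - ((1+γ^2)/2) * c + A :=
        nonneg_of_mul_nonneg_left hfin hEpos
      linarith
    have hcontra2 : 2 * A < c * (1 - γ^2) := by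
      rw [div_lt_iff₀ h1γ2] at hcA
      linarith
    linarith
  intro x
  have h1 := key 1 (Or.inl rfl) x
  have h2 := key (-1) (Or.inr rfl) x
  rw [abs_le]
  constructor
  · nlinarith [h1]
  · nlinarith [h2]
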